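/- Let F = F_q with q odd and L/F a finite extension of degree m. Let δ ∈ F^× represent the determinant of the trace form T_{L/F}(x,y) = Tr_{L/F}(xy) in F^×/(F^×)², and choose λ ∈ L^× with N_{L/F}(λ) = δ (possible since the norm is surjective). Then the bilinear form T_{L/F,λ}(x,y) = Tr_{L/F}(λxy) on L has an orthonormal F-basis. -/

import Mathlib

open Polynomial in
lemma exists_xy {F : Type*} [Field F] [Fintype F] (hq : Fintype.card F % 2 = 1)
    {a b : F} (ha : a ≠ 0) (hb : b ≠ 0) : ∃ x y : F, a * x ^ 2 + b * y ^ 2 = 1 := by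
  obtain ⟨x, y, h⟩ := FiniteField.exists_root_sum_quadratic
    (f := C a * X ^ 2 + C 0 * X + C (-1))
    (g := C b * X ^ 2 + C 0 * X + C 0)
    (degree_quadratic ha) (degree_quadratic hb) hq
  exact ⟨x, y, by simp at h; linear_combination h⟩

lemma aux_ortho {F L : Type*} [Field F] [Fintype F] [AddCommGroup L] [Module F L]
    (hq : Fintype.card F % 2 = 1)
    (B : L →ₗ[F] L →ₗ[F] F) (hsym : ∀ x y, B x y = B y x) :
    ∀ (m : ℕ) (v : Fin m → L) (_ : ∀ i j, i ≠ j → B (v i) (v j) = 0)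
      (c : F) (_ : c ≠ 0) (_ : ∏ i, B (v i) (v i) = c ^ 2),
    ∃ w : Fin m → L,
      (∀ i j, B (w i) (w j) = if i = j then 1 else 0) ∧
      Submodule.span F (Set.range w) = Submodule.span F (Set.range v) := by
  intro m
  induction m with
  | zero => exact fun v _ c _ _ => ⟨v, fun i => i.elim0, rfl⟩
  | succ n IH =>
    intro v horth c hc hprod
    match n, v, horth, hprod, IH with
    | 0, v, horth, hprod, IH =>
      refine ⟨fun _ => c⁻¹ • v 0, fun i j => ?_, ?_⟩
      · have h0 : B (v 0) (v 0) = c ^ 2 := by simpa using hprod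
        fin_cases i; fin_cases j
        simp only [map_smul, LinearMap.smul_apply, smul_eq_mul, h0, if_pos rfl]
        field_simp
        simp
      · have h1 : Set.range (fun _ : Fin 1 => c⁻¹ • v 0) = {c⁻¹ • v 0} := by
          simp [Set.range_const]
        have hv : Set.range v = {v 0} := by
          ext z; constructor
          · rintro ⟨i, rfl⟩; fin_cases i; simp
          · rintro rfl; exact ⟨0, rfl⟩
        rw [h1, hv, Submodule.span_singleton_smul_eq (IsUnit.mk0 _ (inv_ne_zero hc))]
    | (k+1), v, horth, hprod, IH =>
      set a := B (v 0) (v 0) with ha_def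
      set b := B (v 1) (v 1) with hb_def
      have hprod' : a * (b * ∏ i : Fin k, B (v i.succ.succ) (v i.succ.succ)) = c ^ 2 := by
        rw [← hprod, Fin.prod_univ_succ, Fin.prod_univ_succ, Fin.succ_zero_eq_one,
          ← ha_def, ← hb_def]
      have hane : a ≠ 0 := by
        intro h; rw [h, zero_mul] at hprod'; exact pow_ne_zero 2 hc hprod'.symm
      have hbne : b ≠ 0 := by
        intro h; rw [h, zero_mul, mul_zero] at hprod'; exact pow_ne_zero 2 hc hprod'.symm
      obtain ⟨x, y, hxy⟩ := exists_xy hq hane hbne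
      set e := x • v 0 + y • v 1 with he_def
      set f := (-(b * y)) • v 0 + (a * x) • v 1 with hf_def
      have h01ne : (0 : Fin (k+2)) ≠ 1 := Fin.ne_of_val_ne (by simp)
      have h0s : ∀ j : Fin k, (0 : Fin (k+2)) ≠ j.succ.succ := fun j =>
        (Fin.succ_ne_zero _).symm
      have h1s : ∀ j : Fin k, (1 : Fin (k+2)) ≠ j.succ.succ := fun j =>
        Fin.ne_of_val_ne (by simp only [Fin.val_one, Fin.val_succ]; omega)
      have h01 : B (v 0) (v 1) = 0 := horth 0 1 h01ne
      have h10 : B (v 1) (v 0) = 0 := horth 1 0 h01ne.symm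
      have hBee : B e e = 1 := by
        simp only [he_def, map_add, map_smul, LinearMap.add_apply, LinearMap.smul_apply,
          smul_eq_mul, h01, h10, ← ha_def, ← hb_def]
        linear_combination hxy
      have hBef : B e f = 0 := by
        simp only [he_def, hf_def, map_add, map_smul, LinearMap.add_apply, LinearMap.smul_apply,
          smul_eq_mul, h01, h10, ← ha_def, ← hb_def]
        ring
      have hBff : B f f = a * b := by
        simp only [hf_def, map_add, map_smul, LinearMap.add_apply, LinearMap.smul_apply,
          smul_eq_mul, h01, h10, ← ha_def, ← hb_def]
        linear_combination a * b * hxy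
      have hev : ∀ j : Fin k, B e (v j.succ.succ) = 0 := fun j => by
        simp only [he_def, map_add, map_smul, LinearMap.add_apply, LinearMap.smul_apply,
          smul_eq_mul, horth 0 j.succ.succ (h0s j), horth 1 j.succ.succ (h1s j),
          mul_zero, add_zero]
      have hfv : ∀ j : Fin k, B f (v j.succ.succ) = 0 := fun j => by
        simp only [hf_def, map_add, map_smul, LinearMap.add_apply, LinearMap.smul_apply,
          smul_eq_mul, horth 0 j.succ.succ (h0s j), horth 1 j.succ.succ (h1s j),
          mul_zero, add_zero]
      set v' : Fin (k+1) → L := Fin.cons f (fun i : Fin k => v i.succ.succ) with hv'_def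
      have horth' : ∀ i j, i ≠ j → B (v' i) (v' j) = 0 := by
        intro i j
        induction i using Fin.cases with
        | zero =>
          induction j using Fin.cases with
          | zero => intro hij; exact absurd rfl hij
          | succ j' => intro _; simpa [hv'_def] using hfv j'
        | succ i' =>
          induction j using Fin.cases with
          | zero => intro _; rw [hsym]; simpa [hv'_def] using hfv i'
          | succ j' =>
            intro hij
            simpa [hv'_def] using
              horth i'.succ.succ j'.succ.succ
                (fun h => hij (Fin.succ_injective _ h))
      have hprod'' : ∏ i, B (v' i) (v' i) = c ^ 2 := by
        rw [Fin.prod_univ_succ]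
        simp only [hv'_def, Fin.cons_zero, Fin.cons_succ, hBff]
        rw [← hprod', mul_assoc]
      obtain ⟨w', hw'B, hw'span⟩ := IH v' horth' c hc hprod''
      have hv'_le : Submodule.span F (Set.range v') ≤ Submodule.span F (Set.range v) := by
        rw [Submodule.span_le]
        rintro _ ⟨i, rfl⟩
        refine Fin.cases ?_ (fun i' => ?_) i
        · simp only [hv'_def, Fin.cons_zero, hf_def]
          exact Submodule.add_mem _
            (Submodule.smul_mem _ _ (Submodule.subset_span ⟨0, rfl⟩))
            (Submodule.smul_mem _ _ (Submodule.subset_span ⟨1, rfl⟩))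
        · exact Submodule.subset_span ⟨i'.succ.succ, by simp [hv'_def]⟩
      refine ⟨Fin.cons e w', ?_, ?_⟩
      · have heW : ∀ z ∈ Submodule.span F (Set.range v'), B e z = 0 := by
          intro z hz
          have hle : Submodule.span F (Set.range v') ≤ LinearMap.ker (B e) := by
            rw [Submodule.span_le]
            rintro _ ⟨i, rfl⟩
            refine Fin.cases ?_ (fun i' => ?_) i
            · simpa [hv'_def] using hBef
            · simpa [hv'_def] using hev i'
          exact hle hz
        intro i j
        refine Fin.cases ?_ (fun i' => ?_) i
        · refine Fin.cases ?_ (fun j' => ?_) j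
          · simpa using hBee
          · simp only [Fin.cons_zero, Fin.cons_succ]
            rw [heW (w' j') (hw'span ▸ Submodule.subset_span (Set.mem_range_self j'))]
            simp [(Fin.succ_ne_zero j').symm]
        · refine Fin.cases ?_ (fun j' => ?_) j
          · simp only [Fin.cons_zero, Fin.cons_succ]
            rw [hsym, heW (w' i') (hw'span ▸ Submodule.subset_span (Set.mem_range_self i'))]
            simp [Fin.succ_ne_zero i']
          · simpa [Fin.succ_inj] using hw'B i' j'
      · apply le_antisymm
        · rw [Submodule.span_le]
          rintro _ ⟨i, rfl⟩
          refine Fin.cases ?_ (fun i' => ?_) i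
          · simp only [Fin.cons_zero, he_def]
            exact Submodule.add_mem _
              (Submodule.smul_mem _ _ (Submodule.subset_span ⟨0, rfl⟩))
              (Submodule.smul_mem _ _ (Submodule.subset_span ⟨1, rfl⟩))
          · have hmem : w' i' ∈ Submodule.span F (Set.range v') :=
              hw'span ▸ Submodule.subset_span (Set.mem_range_self i')
            simpa using hv'_le hmem
        · rw [Submodule.span_le]
          rintro _ ⟨i, rfl⟩
          set W := Submodule.span F (Set.range (Fin.cons e w' : Fin (k+2) → L)) with hW
          have he_mem : e ∈ W := Submodule.subset_span ⟨0, rfl⟩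
          have hw'_le : Submodule.span F (Set.range w') ≤ W := by
            rw [Submodule.span_le]
            rintro _ ⟨j, rfl⟩
            exact Submodule.subset_span ⟨j.succ, by simp⟩
          have hf_mem : f ∈ W := by
            apply hw'_le
            rw [hw'span]
            exact Submodule.subset_span ⟨0, by simp [hv'_def]⟩
          refine Fin.cases ?_ (fun i' => ?_) i
          · have hv0 : v 0 = (a * x) • e - y • f := by
              rw [he_def, hf_def]
              match_scalars
              · linear_combination -hxy
              · ring
            rw [hv0]
            exact Submodule.sub_mem _ (Submodule.smul_mem _ _ he_mem)
              (Submodule.smul_mem _ _ hf_mem)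
          · refine Fin.cases ?_ (fun i'' => ?_) i'
            · have hv1 : v (Fin.succ 0) = (b * y) • e + x • f := by
                rw [Fin.succ_zero_eq_one, he_def, hf_def]
                match_scalars
                · linear_combination -hxy
                · ring
              rw [hv1]
              exact Submodule.add_mem _ (Submodule.smul_mem _ _ he_mem)
                (Submodule.smul_mem _ _ hf_mem)
            · apply hw'_le
              rw [hw'span]
              exact Submodule.subset_span ⟨i''.succ, by simp [hv'_def]⟩

/-- Over a finite field `F` of odd cardinality, if `δ` represents the determinant of
the trace form of `L/F` modulo squares and `λ ∈ L^×` has norm `δ`, then the twisted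
trace form `(x,y) ↦ Tr_{L/F}(λ x y)` has an orthonormal basis. -/
theorem stmt_17 (F L : Type*) [Field F] [Fintype F] [Field L] [Algebra F L]
    [FiniteDimensional F L]
    (hq : Odd (Fintype.card F))
    (m : ℕ) (hm : Module.finrank F L = m)
    (b : Module.Basis (Fin m) F L) (δ : F) (hδ : δ ≠ 0)
    (hdet : ∃ u : F, u ≠ 0 ∧
      (Matrix.of fun i j => Algebra.trace F L (b i * b j)).det = u ^ 2 * δ)
    (lam : L) (hlam : Algebra.norm F lam = δ) :
    ∃ α : Module.Basis (Fin m) F L,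
      ∀ i j, Algebra.trace F L (lam * α i * α j) = if i = j then 1 else 0 := by
  classical
  have hq' : Fintype.card F % 2 = 1 := Nat.odd_iff.mp hq
  have hchar : ringChar F ≠ 2 := fun h => by
    have := FiniteField.even_card_iff_char_two.mp h; omega
  haveI : Invertible (2 : F) := invertibleOfNonzero (Ring.two_ne_zero hchar)
  obtain ⟨u, hu, hdet⟩ := hdet
  set B : L →ₗ[F] L →ₗ[F] F := LinearMap.mk₂ F (fun x y => Algebra.trace F L (lam * (x * y)))
    (fun x x' y => by simp [add_mul, mul_add])
    (fun c x y => by simp [smul_mul_assoc, mul_smul_comm])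
    (fun x y y' => by simp [mul_add])
    (fun c x y => by simp [mul_smul_comm]) with hB
  have hBapp : ∀ x y : L, B x y = Algebra.trace F L (lam * (x * y)) := fun x y => rfl
  have hsym : ∀ x y : L, B x y = B y x := fun x y => by
    rw [hBapp, hBapp, mul_comm x y]
  have hIsSymm : B.IsSymm := ⟨fun x y => by
    simpa using hsym x y⟩
  obtain ⟨v₀, hv₀⟩ := LinearMap.BilinForm.exists_orthogonal_basis hIsSymm
  set v : Module.Basis (Fin m) F L := v₀.reindex (finCongr hm) with hv
  have hvorth : ∀ i j : Fin m, i ≠ j → B (v i) (v j) = 0 := by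
    intro i j hij
    have hne : (finCongr hm).symm i ≠ (finCongr hm).symm j :=
      fun h => hij (by simpa using congrArg (finCongr hm) h)
    simpa [hv, Module.Basis.reindex_apply] using hv₀ hne
  set A := Algebra.leftMulMatrix b lam with hA
  set T := Matrix.of fun i j => Algebra.trace F L (b i * b j) with hT
  have hGb : LinearMap.toMatrix₂ b b B = A.transpose * T := by
    ext i j
    rw [LinearMap.toMatrix₂_apply, Matrix.mul_apply, hBapp]
    have hsum : lam * b i = ∑ k, A k i • b k := by
      simp_rw [hA, Algebra.leftMulMatrix_eq_repr_mul]
      exact (b.sum_repr (lam * b i)).symm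
    rw [← mul_assoc, hsum, Finset.sum_mul, map_sum]
    simp [smul_mul_assoc, hT, mul_comm]
  have hdetGb : (LinearMap.toMatrix₂ b b B).det = (u * δ) ^ 2 := by
    rw [hGb, Matrix.det_mul, Matrix.det_transpose]
    have hAdet : A.det = δ := by rw [hA, ← Algebra.norm_eq_matrix_det b lam, hlam]
    rw [hAdet, hdet]; ring
  set P := b.toMatrix v with hP
  have hPne : P.det ≠ 0 := by
    have h1 : P * v.toMatrix b = 1 := b.toMatrix_mul_toMatrix_flip v
    exact (IsUnit.of_mul_eq_one (a := P.det) (v.toMatrix b).det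
      (by rw [← Matrix.det_mul, h1, Matrix.det_one])).ne_zero
  have hgram : (LinearMap.toMatrix₂ v v B).det = (P.det * (u * δ)) ^ 2 := by
    rw [← LinearMap.toMatrix₂_mul_basis_toMatrix (b₁ := b) (b₂ := b) v v B,
      Matrix.det_mul, Matrix.det_mul, Matrix.det_transpose, hdetGb]
    ring
  have hdiag : LinearMap.toMatrix₂ v v B = Matrix.diagonal (fun i => B (v i) (v i)) := by
    ext i j
    by_cases h : i = j
    · subst h; simp [LinearMap.toMatrix₂_apply]
    · rw [LinearMap.toMatrix₂_apply, hvorth i j h, Matrix.diagonal_apply_ne _ h]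
  have hprod : ∏ i, B (v i) (v i) = (P.det * (u * δ)) ^ 2 := by
    rw [← Matrix.det_diagonal, ← hdiag, hgram]
  have hcne : P.det * (u * δ) ≠ 0 := mul_ne_zero hPne (mul_ne_zero hu hδ)
  obtain ⟨w, hwB, hwspan⟩ := aux_ortho hq' B hsym m v hvorth _ hcne hprod
  have hspan_top : ⊤ ≤ Submodule.span F (Set.range w) := by
    rw [hwspan, v.span_eq]
  have hli : LinearIndependent F w := by
    apply LinearMap.BilinForm.linearIndependent_of_iIsOrtho
      (LinearMap.BilinForm.iIsOrtho_def.mpr (fun i j hij => by rw [hwB i j, if_neg hij]))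
    intro i h
    rw [hwB i i, if_pos rfl] at h
    exact one_ne_zero h
  refine ⟨Module.Basis.mk hli hspan_top, fun i j => ?_⟩
  have hwij := hwB i j
  rw [hBapp] at hwij
  rw [Module.Basis.coe_mk, mul_assoc, hwij]
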